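/- arXiv:1209.0604 — 2 statements merged into one kernel-verified Lean document; each statement's English description precedes it below -/
import Mathlib

section
/- sum_{n=1}^infty H_n * zeta(3, n) = 2*zeta(3) + (5/4)*zeta(4) - zeta(2), where zeta(3, n) = sum_{j=0}^infty 1/(j+n)^3 is the Hurwitz zeta function. -/
set_option maxHeartbeats 1000000

open scoped BigOperators
open Finset Filter

noncomputable def H (n : ℕ) : ℝ := ∑ k ∈ Finset.range n, (1 : ℝ) / (k + 1)

noncomputable def h : ℕ → ℕ → ℝ
  | 0, n => 1 / n
  | r + 1, n => ∑ k ∈ Finset.range n, h r (k + 1)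

noncomputable def zeta (m : ℕ) : ℝ := ∑' n : ℕ, (1 : ℝ) / ((n : ℝ) + 1) ^ m

noncomputable def hzeta (m k : ℕ) : ℝ := ∑' j : ℕ, (1 : ℝ) / ((j : ℝ) + k) ^ m

noncomputable def zetaH (m : ℕ) : ℝ := ∑' n : ℕ, H (n + 1) / ((n : ℝ) + 1) ^ m

def stirling1 : ℕ → ℕ → ℕ
  | 0, 0 => 1
  | 0, _ + 1 => 0
  | _ + 1, 0 => 0
  | n + 1, k + 1 => stirling1 n k + n * stirling1 n (k + 1)

/-! ### Basic facts about harmonic numbers -/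

lemma H_nonneg (n : ℕ) : 0 ≤ H n := by
  unfold H; positivity

lemma H_succ (n : ℕ) : H (n + 1) = H n + 1 / ((n : ℝ) + 1) := by
  unfold H; rw [Finset.sum_range_succ]

lemma H_le_sqrt (n : ℕ) : H n ≤ 2 * Real.sqrt n := by
  induction n with
  | zero => simp [H]
  | succ n ih =>
    rw [H_succ]
    have h1 : Real.sqrt n ≤ Real.sqrt ((n:ℝ)+1) := by
      apply Real.sqrt_le_sqrt; linarith
    have h2 : (1:ℝ) / ((n:ℝ)+1) ≤ 2 * (Real.sqrt ((n:ℝ)+1) - Real.sqrt n) := by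
      have hs : Real.sqrt ((n:ℝ)+1) ^ 2 = (n:ℝ)+1 := Real.sq_sqrt (by positivity)
      have hs2 : Real.sqrt (n:ℝ) ^ 2 = (n:ℝ) := Real.sq_sqrt (by positivity)
      have hpos : (0:ℝ) < Real.sqrt ((n:ℝ)+1) := Real.sqrt_pos.2 (by positivity)
      have hnn : (0:ℝ) ≤ Real.sqrt n := Real.sqrt_nonneg _
      rw [div_le_iff₀ (by positivity)]
      nlinarith [sq_nonneg (Real.sqrt ((n:ℝ)+1) - Real.sqrt n)]
    have hc : ((n+1:ℕ):ℝ) = (n:ℝ)+1 := by push_cast; ring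
    rw [hc]
    linarith

lemma H_le_self (n : ℕ) : H n ≤ n := by
  induction n with
  | zero => simp [H]
  | succ n ih =>
    rw [H_succ]
    have : (1:ℝ)/((n:ℝ)+1) ≤ 1 := by
      rw [div_le_one (by positivity)]; linarith
    push_cast; linarith

lemma sum_H (s : ℕ) :
    ∑ n ∈ Finset.range (s+1), H (n+1) = ((s:ℝ)+2) * H (s+1) - ((s:ℝ)+1) := by
  induction s with
  | zero => simp [H]; norm_num
  | succ s ih =>
    rw [Finset.sum_range_succ, ih, H_succ (s+1)]
    push_cast
    field_simp
    ring

/-! ### Summability helpers -/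

lemma summable_sq : Summable (fun n : ℕ => (1:ℝ)/((n:ℝ)+1)^2) := by
  have h := Real.summable_one_div_nat_pow.2 (le_refl 2)
  have := (summable_nat_add_iff 1).2 h
  refine this.congr fun n => ?_
  push_cast; ring

lemma summable_32 : Summable (fun n : ℕ => (1:ℝ)/((n:ℝ)+1)^((3:ℝ)/2)) := by
  have h := Real.summable_one_div_nat_rpow.2 (by norm_num : (1:ℝ) < 3/2)
  have := (summable_nat_add_iff 1).2 h
  refine this.congr fun n => ?_
  push_cast; ring

lemma summable_shift (c m : ℕ) (hc : 1 ≤ c) (hm : 2 ≤ m) :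
    Summable (fun j : ℕ => (1:ℝ)/((j:ℝ)+c)^m) := by
  refine summable_sq.of_nonneg_of_le (fun j => by positivity) (fun j => ?_)
  apply one_div_le_one_div_of_le (by positivity)
  calc ((j:ℝ)+1)^2 ≤ ((j:ℝ)+c)^2 := by
        apply pow_le_pow_left₀ (by positivity)
        have : (1:ℝ) ≤ (c:ℝ) := by exact_mod_cast hc
        linarith
    _ ≤ ((j:ℝ)+c)^m := by
        apply pow_le_pow_right₀
        · have : (1:ℝ) ≤ (c:ℝ) := by exact_mod_cast hc
          linarith
        · exact hm

lemma sqrt_div_sq (n : ℕ) : Real.sqrt ((n:ℝ)+1) / ((n:ℝ)+1)^2 = 1/((n:ℝ)+1)^((3:ℝ)/2) := by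
  have hc : (0:ℝ) < (n:ℝ)+1 := by positivity
  have h32 : (0:ℝ) < ((n:ℝ)+1)^((3:ℝ)/2) := Real.rpow_pos_of_pos hc _
  rw [div_eq_div_iff (by positivity) h32.ne', one_mul, Real.sqrt_eq_rpow]
  calc ((n:ℝ)+1)^((1:ℝ)/2) * ((n:ℝ)+1)^((3:ℝ)/2)
      = ((n:ℝ)+1)^((1:ℝ)/2+(3:ℝ)/2) := (Real.rpow_add hc _ _).symm
    _ = ((n:ℝ)+1)^((2:ℕ):ℝ) := by norm_num
    _ = ((n:ℝ)+1)^(2:ℕ) := Real.rpow_natCast _ 2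

/-! ### Telescoping sums -/

lemma tendsto_one_div (c : ℝ) : Tendsto (fun n : ℕ => 1/((n:ℝ)+c)) atTop (nhds 0) := by
  have h1 : Tendsto (fun n : ℕ => (n:ℝ)+c) atTop atTop :=
    tendsto_atTop_add_const_right _ c tendsto_natCast_atTop_atTop
  simpa [one_div, Pi.inv_def] using h1.inv_tendsto_atTop

lemma partial_teleH (k N : ℕ) :
    ∑ a ∈ range N, ((1:ℝ)/((a:ℝ)+1) - 1/((a:ℝ)+1+k))
      = H k - ∑ x ∈ range k, (1:ℝ)/((N:ℝ)+(x:ℝ)+1) := by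
  rw [Finset.sum_sub_distrib]
  have e1 : ∑ a ∈ range N, (1:ℝ)/((a:ℝ)+1) = H N := rfl
  have e2 : H (k + N) = H k + ∑ a ∈ range N, (1:ℝ)/((a:ℝ)+1+k) := by
    unfold H
    rw [Finset.sum_range_add]
    congr 1
    apply Finset.sum_congr rfl
    intro a _
    push_cast; ring_nf
  have e3 : H (N + k) = H N + ∑ x ∈ range k, (1:ℝ)/((N:ℝ)+(x:ℝ)+1) := by
    unfold H
    rw [Finset.sum_range_add]
    congr 1
    apply Finset.sum_congr rfl
    intro a _
    push_cast; ring_nf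
  rw [e1]
  have e4 : H (k+N) = H (N+k) := by rw [Nat.add_comm]
  linarith

lemma hasSum_teleH (k : ℕ) :
    HasSum (fun a : ℕ => (1:ℝ)/((a:ℝ)+1) - 1/((a:ℝ)+1+k)) (H k) := by
  rw [hasSum_iff_tendsto_nat_of_nonneg]
  · have h : Tendsto (fun N : ℕ => H k - ∑ x ∈ range k, (1:ℝ)/((N:ℝ)+(x:ℝ)+1))
        atTop (nhds (H k - 0)) := by
      apply Tendsto.sub tendsto_const_nhds
      have : Tendsto (fun N : ℕ => ∑ x ∈ range k, (1:ℝ)/((N:ℝ)+(x:ℝ)+1)) atTop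
          (nhds (∑ x ∈ range k, (0:ℝ))) := by
        apply tendsto_finset_sum
        intro x _
        have := tendsto_one_div ((x:ℝ)+1)
        refine this.congr fun n => ?_
        ring_nf
      simpa using this
    rw [sub_zero] at h
    refine h.congr fun N => ?_
    rw [partial_teleH]
  · intro a
    have h1 : (1:ℝ)/((a:ℝ)+1+k) ≤ 1/((a:ℝ)+1) := by
      apply one_div_le_one_div_of_le (by positivity)
      have : (0:ℝ) ≤ (k:ℝ) := by positivity
      linarith
    linarith

lemma hasSum_tele1 (k : ℕ) (hk : 1 ≤ k) :
    HasSum (fun a : ℕ => (1:ℝ)/((a:ℝ)+k) - 1/((a:ℝ)+k+1)) (1/(k:ℝ)) := by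
  have hk' : (1:ℝ) ≤ (k:ℝ) := by exact_mod_cast hk
  rw [hasSum_iff_tendsto_nat_of_nonneg]
  · have hps : ∀ N : ℕ, ∑ a ∈ range N, ((1:ℝ)/((a:ℝ)+k) - 1/((a:ℝ)+k+1))
        = 1/(k:ℝ) - 1/((N:ℝ)+k) := by
      intro N
      calc ∑ a ∈ range N, ((1:ℝ)/((a:ℝ)+k) - 1/((a:ℝ)+k+1))
          = ∑ a ∈ range N, ((fun a : ℕ => (1:ℝ)/((a:ℝ)+k)) a
              - (fun a : ℕ => (1:ℝ)/((a:ℝ)+k)) (a+1)) := by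
            apply Finset.sum_congr rfl
            intro a _
            push_cast; ring_nf
        _ = 1/(k:ℝ) - 1/((N:ℝ)+k) := by
            rw [Finset.sum_range_sub']
            norm_num
    have h : Tendsto (fun N : ℕ => 1/(k:ℝ) - 1/((N:ℝ)+k)) atTop (nhds (1/(k:ℝ) - 0)) :=
      Tendsto.sub tendsto_const_nhds (tendsto_one_div (k:ℝ))
    rw [sub_zero] at h
    refine h.congr fun N => (hps N).symm
  · intro a
    have h1 : (1:ℝ)/((a:ℝ)+k+1) ≤ 1/((a:ℝ)+k) := by
      apply one_div_le_one_div_of_le (by linarith [Nat.cast_nonneg (α := ℝ) a])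
      linarith
    linarith

/-! ### hzeta facts -/

lemma hz_hasSum (m k : ℕ) (hm : 2 ≤ m) (hk : 1 ≤ k) :
    HasSum (fun j : ℕ => (1:ℝ)/((j:ℝ)+k)^m) (hzeta m k) :=
  (summable_shift k m hk hm).hasSum

lemma hz_nonneg (m k : ℕ) : 0 ≤ hzeta m k := by
  apply tsum_nonneg
  intro j; positivity

lemma zeta2_hasSum : HasSum (fun n : ℕ => (1:ℝ)/((n:ℝ)+1)^2) (zeta 2) :=
  summable_sq.hasSum

lemma hz2_le (k : ℕ) (hk : 1 ≤ k) : hzeta 2 (k+1) ≤ 1/(k:ℝ) := by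
  have hk' : (1:ℝ) ≤ (k:ℝ) := by exact_mod_cast hk
  rw [← (hasSum_tele1 k hk).tsum_eq]
  unfold hzeta
  apply Summable.tsum_le_tsum
  · intro j
    have h1 : (1:ℝ)/((j:ℝ)+k) - 1/((j:ℝ)+k+1) = 1/(((j:ℝ)+k)*((j:ℝ)+k+1)) := by
      field_simp
      ring
    rw [h1]
    apply one_div_le_one_div_of_le (by positivity)
    push_cast
    nlinarith [Nat.cast_nonneg (α := ℝ) j]
  · exact summable_shift (k+1) 2 (by omega) le_rfl
  · exact (hasSum_tele1 k hk).summable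

lemma hz2_le' (k : ℕ) : hzeta 2 (k+1) ≤ 2/((k:ℝ)+1) := by
  rcases Nat.eq_zero_or_pos k with hz | hz
  · subst hz
    norm_num
    have h0 : hzeta 2 1 = 1 + hzeta 2 2 := by
      unfold hzeta
      rw [Summable.tsum_eq_zero_add (summable_shift 1 2 le_rfl le_rfl)]
      norm_num
      apply tsum_congr
      intro j; push_cast; ring_nf
    rw [h0]
    have := hz2_le 1 le_rfl
    norm_num at this
    linarith
  · calc hzeta 2 (k+1) ≤ 1/(k:ℝ) := hz2_le k hz
      _ ≤ 2/((k:ℝ)+1) := by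
          rw [div_le_div_iff₀ (by exact_mod_cast hz) (by positivity)]
          have : (1:ℝ) ≤ (k:ℝ) := by exact_mod_cast hz
          linarith

lemma hz3_le (k : ℕ) : hzeta 3 (k+1) ≤ 2/((k:ℝ)+1)^2 := by
  have h1 : hzeta 3 (k+1) ≤ (1/((k:ℝ)+1)) * hzeta 2 (k+1) := by
    unfold hzeta
    rw [← tsum_mul_left]
    apply Summable.tsum_le_tsum
    · intro j
      have hj : (0:ℝ) < (j:ℝ) + (k+1) := by positivity
      have hcast : ((k+1:ℕ):ℝ) = (k:ℝ)+1 := by push_cast; ring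
      rw [hcast]
      have h2 : (1:ℝ)/((j:ℝ)+((k:ℝ)+1))^3
          = (1/((j:ℝ)+((k:ℝ)+1))) * (1/((j:ℝ)+((k:ℝ)+1))^2) := by
        field_simp
      rw [h2]
      apply mul_le_mul_of_nonneg_right _ (by positivity)
      apply one_div_le_one_div_of_le (by positivity)
      have := Nat.cast_nonneg (α := ℝ) j
      linarith
    · exact summable_shift (k+1) 3 (by omega) (by omega)
    · exact (summable_shift (k+1) 2 (by omega) le_rfl).mul_left _
  calc hzeta 3 (k+1) ≤ (1/((k:ℝ)+1)) * hzeta 2 (k+1) := h1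
    _ ≤ (1/((k:ℝ)+1)) * (2/((k:ℝ)+1)) := by
        apply mul_le_mul_of_nonneg_left (hz2_le' k) (by positivity)
    _ = 2/((k:ℝ)+1)^2 := by field_simp

/-! ### Partial fraction HasSum identities -/

lemma hasSum_A (k : ℕ) (hk : 1 ≤ k) :
    HasSum (fun a : ℕ => (1:ℝ)/(((a:ℝ)+1)*((a:ℝ)+1+k)^2))
      (H k/(k:ℝ)^2 - hzeta 2 (k+1)/(k:ℝ)) := by
  have hk0 : (0:ℝ) < (k:ℝ) := by exact_mod_cast hk
  have h1 := (hasSum_teleH k).mul_left (1/(k:ℝ)^2)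
  have h2 := (hz_hasSum 2 (k+1) le_rfl (by omega)).mul_left (1/(k:ℝ))
  have h3 := h1.sub h2
  have h4 : (fun a : ℕ => 1/(k:ℝ)^2 * ((1:ℝ)/((a:ℝ)+1) - 1/((a:ℝ)+1+k))
      - 1/(k:ℝ) * ((1:ℝ)/((a:ℝ)+((k+1:ℕ):ℝ))^2))
      = fun a : ℕ => (1:ℝ)/(((a:ℝ)+1)*((a:ℝ)+1+k)^2) := by
    funext a
    have ha : (0:ℝ) < (a:ℝ)+1 := by positivity
    have hb : (0:ℝ) < (a:ℝ)+1+k := by positivity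
    push_cast
    field_simp
    ring
  rw [h4] at h3
  convert h3 using 1
  · rfl
  · ring

lemma hasSum_B (k : ℕ) (hk : 1 ≤ k) :
    HasSum (fun a : ℕ => (1:ℝ)/(((a:ℝ)+1)^2*((a:ℝ)+1+k)^2))
      (zeta 2/(k:ℝ)^2 - 2*(H k)/(k:ℝ)^3 + hzeta 2 (k+1)/(k:ℝ)^2) := by
  have hk0 : (0:ℝ) < (k:ℝ) := by exact_mod_cast hk
  have h1 := zeta2_hasSum.mul_left (1/(k:ℝ)^2)
  have h2 := (hasSum_teleH k).mul_left (2/(k:ℝ)^3)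
  have h3 := (hz_hasSum 2 (k+1) le_rfl (by omega)).mul_left (1/(k:ℝ)^2)
  have h4 := (h1.sub h2).add h3
  have he : (fun a : ℕ => 1/(k:ℝ)^2 * ((1:ℝ)/((a:ℝ)+1)^2)
      - 2/(k:ℝ)^3 * ((1:ℝ)/((a:ℝ)+1) - 1/((a:ℝ)+1+k))
      + 1/(k:ℝ)^2 * ((1:ℝ)/((a:ℝ)+((k+1:ℕ):ℝ))^2))
      = fun a : ℕ => (1:ℝ)/(((a:ℝ)+1)^2*((a:ℝ)+1+k)^2) := by
    funext a
    have ha : (0:ℝ) < (a:ℝ)+1 := by positivity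
    have hb : (0:ℝ) < (a:ℝ)+1+k := by positivity
    push_cast
    field_simp
    ring
  rw [he] at h4
  convert h4 using 1
  · rfl
  · ring

/-! ### Diagonal reindexing -/

def diagEquiv : (Σ s : ℕ, Fin (s+1)) ≃ ℕ × ℕ where
  toFun x := ((x.2 : ℕ), x.1 - (x.2 : ℕ))
  invFun p := ⟨p.1 + p.2, ⟨p.1, by omega⟩⟩
  left_inv := by
    rintro ⟨s, ⟨i, hi⟩⟩
    have h1 : i + (s - i) = s := by omega
    refine Sigma.ext h1 ?_
    rw [Fin.heq_ext_iff (by show i + (s - i) + 1 = s + 1; omega)]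
  right_inv := by
    rintro ⟨a, b⟩
    simp

lemma tsum_diag (g : ℕ → ℕ → ℝ) (hs : Summable fun p : ℕ × ℕ => g p.1 (p.1 + p.2)) :
    ∑' p : ℕ × ℕ, g p.1 (p.1 + p.2) = ∑' s : ℕ, ∑ a ∈ range (s+1), g a s := by
  set f : ℕ × ℕ → ℝ := fun p => g p.1 (p.1 + p.2) with hf
  have h1 : ∑' p : ℕ × ℕ, f p = ∑' x : (Σ s : ℕ, Fin (s+1)), f (diagEquiv x) :=
    (diagEquiv.tsum_eq f).symm
  have hsum : Summable (f ∘ diagEquiv) := diagEquiv.summable_iff.2 hs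
  have h2 : ∑' x : (Σ s : ℕ, Fin (s+1)), f (diagEquiv x)
      = ∑' s : ℕ, ∑' i : Fin (s+1), f (diagEquiv ⟨s, i⟩) :=
    Summable.tsum_sigma' (fun b => hsum.sigma_factor b) hsum
  rw [h1, h2]
  apply tsum_congr
  intro s
  rw [tsum_fintype]
  have h3 : ∀ i : Fin (s+1), f (diagEquiv ⟨s, i⟩) = g (i : ℕ) s := by
    intro i
    show g (i:ℕ) ((i:ℕ) + (s - (i:ℕ))) = g (i:ℕ) s
    congr 1
    omega
  calc ∑ i : Fin (s+1), f (diagEquiv ⟨s, i⟩) = ∑ i : Fin (s+1), g (i:ℕ) s := by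
        apply Finset.sum_congr rfl; intro i _; exact h3 i
    _ = ∑ a ∈ range (s+1), g a s := Fin.sum_univ_eq_sum_range (fun a => g a s) (s+1)
/-! ### The three double-sum functions -/

noncomputable def Ffun (p : ℕ × ℕ) : ℝ := 1/(((p.1:ℝ)+1)*((p.1:ℝ)+(p.2:ℝ)+2)^2)
noncomputable def Gfun (p : ℕ × ℕ) : ℝ := 1/(((p.1:ℝ)+1)^2*((p.1:ℝ)+(p.2:ℝ)+2)^2)
noncomputable def Mfun (p : ℕ × ℕ) : ℝ := H (p.1+1) * (1/(((p.1:ℝ)+(p.2:ℝ)+1)^3))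

lemma fiberF (a : ℕ) : HasSum (fun b => Ffun (a, b)) ((1/((a:ℝ)+1)) * hzeta 2 (a+2)) := by
  have h := (hz_hasSum 2 (a+2) le_rfl (by omega)).mul_left (1/((a:ℝ)+1))
  have he : (fun b : ℕ => 1/((a:ℝ)+1) * ((1:ℝ)/((b:ℝ)+((a+2:ℕ):ℝ))^2))
      = fun b => Ffun (a, b) := by
    funext b
    unfold Ffun
    push_cast
    rw [one_div_mul_one_div]
    ring_nf
  rwa [he] at h

lemma fiberG (a : ℕ) : HasSum (fun b => Gfun (a, b)) ((1/((a:ℝ)+1)^2) * hzeta 2 (a+2)) := by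
  have h := (hz_hasSum 2 (a+2) le_rfl (by omega)).mul_left (1/((a:ℝ)+1)^2)
  have he : (fun b : ℕ => 1/((a:ℝ)+1)^2 * ((1:ℝ)/((b:ℝ)+((a+2:ℕ):ℝ))^2))
      = fun b => Gfun (a, b) := by
    funext b
    unfold Gfun
    push_cast
    rw [one_div_mul_one_div]
    ring_nf
  rwa [he] at h

lemma fiberM (a : ℕ) : HasSum (fun b => Mfun (a, b)) (H (a+1) * hzeta 3 (a+1)) := by
  have h := (hz_hasSum 3 (a+1) (by omega) (by omega)).mul_left (H (a+1))
  have he : (fun b : ℕ => H (a+1) * ((1:ℝ)/((b:ℝ)+((a+1:ℕ):ℝ))^3))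
      = fun b => Mfun (a, b) := by
    funext b
    unfold Mfun
    push_cast
    ring_nf
  rwa [he] at h

/-! ### Summability of the double sums -/

lemma summable_F : Summable Ffun := by
  refine (summable_prod_of_nonneg (fun p => by unfold Ffun; positivity)).2
    ⟨fun a => (fiberF a).summable, ?_⟩
  have he : (fun a : ℕ => ∑' b, Ffun (a, b)) = fun a : ℕ => (1/((a:ℝ)+1)) * hzeta 2 (a+2) :=
    funext fun a => (fiberF a).tsum_eq
  rw [he]
  refine summable_sq.of_nonneg_of_le
    (fun a => mul_nonneg (by positivity) (hz_nonneg _ _)) (fun a => ?_)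
  have h1 : hzeta 2 (a+2) ≤ 1/((a:ℝ)+1) := by
    have := hz2_le (a+1) (by omega)
    push_cast at this ⊢
    convert this using 2 <;> push_cast <;> ring
  calc (1/((a:ℝ)+1)) * hzeta 2 (a+2) ≤ (1/((a:ℝ)+1)) * (1/((a:ℝ)+1)) := by
        apply mul_le_mul_of_nonneg_left h1 (by positivity)
    _ = 1/((a:ℝ)+1)^2 := by rw [one_div_mul_one_div]; ring_nf

lemma summable_G : Summable Gfun := by
  refine (summable_prod_of_nonneg (fun p => by unfold Gfun; positivity)).2
    ⟨fun a => (fiberG a).summable, ?_⟩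
  have he : (fun a : ℕ => ∑' b, Gfun (a, b)) = fun a : ℕ => (1/((a:ℝ)+1)^2) * hzeta 2 (a+2) :=
    funext fun a => (fiberG a).tsum_eq
  rw [he]
  refine summable_sq.of_nonneg_of_le
    (fun a => mul_nonneg (by positivity) (hz_nonneg _ _)) (fun a => ?_)
  have h1 : hzeta 2 (a+2) ≤ 1 := by
    have h2 := hz2_le (a+1) (by omega)
    have h3 : (1:ℝ)/((a+1:ℕ):ℝ) ≤ 1 := by
      rw [div_le_one (by positivity)]
      push_cast; linarith [Nat.cast_nonneg (α := ℝ) a]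
    exact le_trans h2 h3
  calc (1/((a:ℝ)+1)^2) * hzeta 2 (a+2) ≤ (1/((a:ℝ)+1)^2) * 1 := by
        apply mul_le_mul_of_nonneg_left h1 (by positivity)
    _ = 1/((a:ℝ)+1)^2 := by ring

lemma summable_Mterm : Summable (fun n : ℕ => H (n+1) * hzeta 3 (n+1)) := by
  refine (summable_32.mul_left 4).of_nonneg_of_le
    (fun n => mul_nonneg (H_nonneg _) (hz_nonneg _ _)) (fun n => ?_)
  have h1 : H (n+1) ≤ 2 * Real.sqrt ((n:ℝ)+1) := by
    have := H_le_sqrt (n+1)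
    push_cast at this
    convert this using 3
  have h2 : hzeta 3 (n+1) ≤ 2/((n:ℝ)+1)^2 := hz3_le n
  calc H (n+1) * hzeta 3 (n+1)
      ≤ (2 * Real.sqrt ((n:ℝ)+1)) * (2/((n:ℝ)+1)^2) := by
        apply mul_le_mul h1 h2 (hz_nonneg _ _)
        positivity
    _ = 4 * (Real.sqrt ((n:ℝ)+1) / ((n:ℝ)+1)^2) := by ring
    _ = 4 * (1/((n:ℝ)+1)^((3:ℝ)/2)) := by rw [sqrt_div_sq]

lemma summable_M : Summable Mfun := by
  refine (summable_prod_of_nonneg (fun p => by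
    unfold Mfun
    exact mul_nonneg (H_nonneg _) (by positivity))).2
    ⟨fun a => (fiberM a).summable, ?_⟩
  have he : (fun a : ℕ => ∑' b, Mfun (a, b)) = fun a : ℕ => H (a+1) * hzeta 3 (a+1) :=
    funext fun a => (fiberM a).tsum_eq
  rw [he]
  exact summable_Mterm

lemma summable_zetaH2term : Summable (fun n : ℕ => H (n+1) / ((n:ℝ)+1)^2) := by
  refine (summable_32.mul_left 2).of_nonneg_of_le
    (fun n => div_nonneg (H_nonneg _) (by positivity)) (fun n => ?_)
  have h1 : H (n+1) ≤ 2 * Real.sqrt ((n:ℝ)+1) := by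
    have := H_le_sqrt (n+1)
    push_cast at this
    convert this using 3
  calc H (n+1) / ((n:ℝ)+1)^2 ≤ (2 * Real.sqrt ((n:ℝ)+1)) / ((n:ℝ)+1)^2 := by
        apply div_le_div_of_nonneg_right h1 (by positivity) |>.trans_eq rfl
    _ = 2 * (Real.sqrt ((n:ℝ)+1) / ((n:ℝ)+1)^2) := by ring
    _ = 2 * (1/((n:ℝ)+1)^((3:ℝ)/2)) := by rw [sqrt_div_sq]

lemma summable_zetaH3term : Summable (fun n : ℕ => H (n+1) / ((n:ℝ)+1)^3) := by
  refine summable_sq.of_nonneg_of_le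
    (fun n => div_nonneg (H_nonneg _) (by positivity)) (fun n => ?_)
  have h1 : H (n+1) ≤ (n:ℝ)+1 := by
    have := H_le_self (n+1)
    push_cast at this
    linarith
  calc H (n+1) / ((n:ℝ)+1)^3 ≤ ((n:ℝ)+1) / ((n:ℝ)+1)^3 := by
        apply div_le_div_of_nonneg_right h1 (by positivity) |>.trans_eq rfl
    _ = 1/((n:ℝ)+1)^2 := by
        rw [div_eq_div_iff (by positivity) (by positivity)]
        ring

lemma summable_X : Summable (fun b : ℕ => hzeta 2 (b+2) / ((b:ℝ)+1)) := by
  refine summable_sq.of_nonneg_of_le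
    (fun b => div_nonneg (hz_nonneg _ _) (by positivity)) (fun b => ?_)
  have h1 : hzeta 2 (b+2) ≤ 1/((b:ℝ)+1) := by
    have := hz2_le (b+1) (by omega)
    push_cast at this
    convert this using 2 <;> push_cast <;> ring
  calc hzeta 2 (b+2) / ((b:ℝ)+1) ≤ (1/((b:ℝ)+1)) / ((b:ℝ)+1) := by
        apply div_le_div_of_nonneg_right h1 (by positivity) |>.trans_eq rfl
    _ = 1/((b:ℝ)+1)^2 := by
        rw [div_div]; ring_nf

lemma summable_W : Summable (fun b : ℕ => hzeta 2 (b+2) / ((b:ℝ)+1)^2) := by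
  refine summable_sq.of_nonneg_of_le
    (fun b => div_nonneg (hz_nonneg _ _) (by positivity)) (fun b => ?_)
  have h1 : hzeta 2 (b+2) ≤ 1 := by
    have h2 := hz2_le (b+1) (by omega)
    have h3 : (1:ℝ)/((b+1:ℕ):ℝ) ≤ 1 := by
      rw [div_le_one (by positivity)]
      push_cast; linarith [Nat.cast_nonneg (α := ℝ) b]
    exact le_trans h2 h3
  calc hzeta 2 (b+2) / ((b:ℝ)+1)^2 ≤ 1 / ((b:ℝ)+1)^2 := by
        apply div_le_div_of_nonneg_right h1 (by positivity) |>.trans_eq rfl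

lemma summable_diagF : Summable (fun s : ℕ => H (s+1) * (1/((s:ℝ)+2)^2)) := by
  refine summable_zetaH2term.of_nonneg_of_le
    (fun s => mul_nonneg (H_nonneg _) (by positivity)) (fun s => ?_)
  have h1 : (1:ℝ)/((s:ℝ)+2)^2 ≤ 1/((s:ℝ)+1)^2 := by
    apply one_div_le_one_div_of_le (by positivity)
    apply pow_le_pow_left₀ (by positivity)
    linarith
  calc H (s+1) * (1/((s:ℝ)+2)^2) ≤ H (s+1) * (1/((s:ℝ)+1)^2) :=
        mul_le_mul_of_nonneg_left h1 (H_nonneg _)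
    _ = H (s+1) / ((s:ℝ)+1)^2 := by ring

lemma summable_23 : Summable (fun n : ℕ => (1:ℝ)/((n:ℝ)+2)^3) := by
  have := summable_shift 2 3 (by omega) (by omega)
  refine this.congr fun n => ?_
  push_cast; ring_nf
/-! ### Values of zeta(2), zeta(4) -/

lemma zeta_two_eq : zeta 2 = Real.pi^2/6 := by
  have h : HasSum (fun n : ℕ => (1:ℝ)/((n:ℝ))^2) (Real.pi^2/6 + ∑ i ∈ range 1, (1:ℝ)/((i:ℝ))^2) := by
    simpa using hasSum_zeta_two
  have h1 := (hasSum_nat_add_iff (f := fun n : ℕ => (1:ℝ)/((n:ℝ))^2) 1).2 h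
  unfold zeta
  rw [show (fun n : ℕ => (1:ℝ)/((n:ℝ)+1)^2) = fun n : ℕ => (1:ℝ)/(((n+1:ℕ):ℝ))^2 by
    funext n; push_cast; ring]
  exact h1.tsum_eq

lemma zeta_four_eq : zeta 4 = Real.pi^4/90 := by
  have h : HasSum (fun n : ℕ => (1:ℝ)/((n:ℝ))^4) (Real.pi^4/90 + ∑ i ∈ range 1, (1:ℝ)/((i:ℝ))^4) := by
    simpa using hasSum_zeta_four
  have h1 := (hasSum_nat_add_iff (f := fun n : ℕ => (1:ℝ)/((n:ℝ))^4) 1).2 h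
  unfold zeta
  rw [show (fun n : ℕ => (1:ℝ)/((n:ℝ)+1)^4) = fun n : ℕ => (1:ℝ)/(((n+1:ℕ):ℝ))^4 by
    funext n; push_cast; ring]
  exact h1.tsum_eq

/-! ### Fiberwise identities in the other order -/

lemma hasSum_Ab (b : ℕ) :
    HasSum (fun a : ℕ => Ffun (a, b))
      (H (b+1)/((b:ℝ)+1)^2 - hzeta 2 (b+2)/((b:ℝ)+1)) := by
  have h := hasSum_A (b+1) (by omega)
  have he : (fun a : ℕ => (1:ℝ)/(((a:ℝ)+1)*((a:ℝ)+1+((b+1:ℕ):ℝ))^2))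
      = fun a : ℕ => Ffun (a, b) := by
    funext a
    unfold Ffun
    push_cast
    ring_nf
  rw [he] at h
  convert h using 2 <;> push_cast <;> ring

lemma hasSum_Bb (b : ℕ) :
    HasSum (fun a : ℕ => Gfun (a, b))
      (zeta 2/((b:ℝ)+1)^2 - 2*(H (b+1))/((b:ℝ)+1)^3 + hzeta 2 (b+2)/((b:ℝ)+1)^2) := by
  have h := hasSum_B (b+1) (by omega)
  have he : (fun a : ℕ => (1:ℝ)/(((a:ℝ)+1)^2*((a:ℝ)+1+((b+1:ℕ):ℝ))^2))
      = fun a : ℕ => Gfun (a, b) := by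
    funext a
    unfold Gfun
    push_cast
    ring_nf
  rw [he] at h
  convert h using 2 <;> push_cast <;> ring

noncomputable def gF (a s : ℕ) : ℝ := 1/(((a:ℝ)+1)*((s:ℝ)+2)^2)
noncomputable def gM (a s : ℕ) : ℝ := H (a+1) * ((1:ℝ)/((s:ℝ)+1)^3)

/-! ### The Euler sum zetaH 2 = 2 zeta 3 -/

lemma zetaH2_eq : zetaH 2 = 2 * zeta 3 := by
  set T := ∑' p : ℕ × ℕ, Ffun p with hT
  set X := ∑' b : ℕ, hzeta 2 (b+2)/((b:ℝ)+1) with hX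
  -- diagonal evaluation
  have hgs : Summable (fun p : ℕ × ℕ => gF p.1 (p.1+p.2)) :=
    summable_F.congr (fun p => by unfold Ffun gF; push_cast; ring_nf)
  have e_diag : T = ∑' s : ℕ, H (s+1) * (1/((s:ℝ)+2)^2) := by
    rw [hT]
    rw [show (∑' p : ℕ × ℕ, Ffun p) = ∑' p : ℕ × ℕ, gF p.1 (p.1+p.2) from
      tsum_congr (fun p => by unfold Ffun gF; push_cast; ring_nf)]
    rw [tsum_diag gF hgs]
    apply tsum_congr
    intro s
    unfold gF
    calc ∑ a ∈ range (s+1), (1:ℝ)/(((a:ℝ)+1)*((s:ℝ)+2)^2)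
        = ∑ a ∈ range (s+1), (1:ℝ)/((a:ℝ)+1) * (1/((s:ℝ)+2)^2) := by
          apply Finset.sum_congr rfl
          intro a _
          rw [one_div_mul_one_div]
      _ = H (s+1) * (1/((s:ℝ)+2)^2) := by rw [← Finset.sum_mul]; rfl
  -- shift identity : zetaH 2 = zeta 3 + (diagonal value)
  have e_shift : zetaH 2 = zeta 3 + ∑' s : ℕ, H (s+1) * (1/((s:ℝ)+2)^2) := by
    have hz3 : zeta 3 = 1 + ∑' n : ℕ, (1:ℝ)/((n:ℝ)+2)^3 := by
      unfold zeta
      have hsum : Summable (fun n : ℕ => (1:ℝ)/((n:ℝ)+1)^3) := by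
        have := summable_shift 1 3 le_rfl (by omega)
        refine this.congr fun n => ?_
        push_cast; ring_nf
      rw [Summable.tsum_eq_zero_add hsum]
      norm_num
      apply tsum_congr
      intro n; push_cast; ring_nf
    have hH1 : H 1 = 1 := by simp [H]
    unfold zetaH
    rw [Summable.tsum_eq_zero_add summable_zetaH2term]
    have e1 : (fun n : ℕ => H (n+1+1) / ((↑(n+1):ℝ)+1)^2)
        = fun n : ℕ => H (n+1) * (1/((n:ℝ)+2)^2) + 1/((n:ℝ)+2)^3 := by
      funext n
      rw [H_succ (n+1)]
      push_cast
      have : (0:ℝ) < (n:ℝ)+2 := by positivity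
      field_simp
      ring
    rw [e1, Summable.tsum_add summable_diagF summable_23, hH1]
    rw [hz3]
    norm_num
    ring
  -- swap evaluation
  have e_swap : T = zetaH 2 - X := by
    have hcomm : ∑' q : ℕ × ℕ, Ffun (q.2, q.1) = T := (Equiv.prodComm ℕ ℕ).tsum_eq Ffun
    have hswap : Summable (fun q : ℕ × ℕ => Ffun (q.2, q.1)) := summable_F.prod_symm
    rw [← hcomm, Summable.tsum_prod' hswap (fun b => (hasSum_Ab b).summable)]
    have e2 : (fun b : ℕ => ∑' a : ℕ, Ffun (a, b))
        = fun b : ℕ => H (b+1)/((b:ℝ)+1)^2 - hzeta 2 (b+2)/((b:ℝ)+1) :=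
      funext fun b => (hasSum_Ab b).tsum_eq
    rw [e2, Summable.tsum_sub summable_zetaH2term summable_X]
    rfl
  -- X = T
  have e_X : X = T := by
    rw [hX]
    rw [show (fun b : ℕ => hzeta 2 (b+2)/((b:ℝ)+1))
        = fun b : ℕ => (1/((b:ℝ)+1)) * hzeta 2 (b+2) from funext fun b => by ring]
    rw [show (∑' b : ℕ, (1/((b:ℝ)+1)) * hzeta 2 (b+2))
        = ∑' b : ℕ, ∑' j : ℕ, Ffun (b, j) from
      tsum_congr fun b => ((fiberF b).tsum_eq).symm]
    exact (Summable.tsum_prod' summable_F (fun a => (fiberF a).summable)).symm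
  have h1 : T = zetaH 2 - zeta 3 := by rw [e_diag]; linarith [e_shift]
  have h2 : T = zetaH 2 - T := e_swap.trans (by rw [e_X])
  linarith

/-! ### The Euler sum zetaH 3 = zeta2^2/2 -/

lemma zetaH3_eq : zetaH 3 = zeta 2^2/2 := by
  set W := ∑' b : ℕ, hzeta 2 (b+2)/((b:ℝ)+1)^2 with hW
  have e1 : ∑' p : ℕ × ℕ, Gfun p = W := by
    rw [Summable.tsum_prod' summable_G (fun a => (fiberG a).summable), hW]
    apply tsum_congr
    intro a
    rw [(fiberG a).tsum_eq]
    ring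
  have e2 : ∑' p : ℕ × ℕ, Gfun p = zeta 2 * zeta 2 - 2 * zetaH 3 + W := by
    have hcomm : ∑' q : ℕ × ℕ, Gfun (q.2, q.1) = ∑' p : ℕ × ℕ, Gfun p :=
      (Equiv.prodComm ℕ ℕ).tsum_eq Gfun
    have hswap : Summable (fun q : ℕ × ℕ => Gfun (q.2, q.1)) := summable_G.prod_symm
    rw [← hcomm, Summable.tsum_prod' hswap (fun b => (hasSum_Bb b).summable)]
    have e3 : (fun b : ℕ => ∑' a : ℕ, Gfun (a, b))
        = fun b : ℕ => (zeta 2/((b:ℝ)+1)^2 - 2*(H (b+1))/((b:ℝ)+1)^3)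
            + hzeta 2 (b+2)/((b:ℝ)+1)^2 := by
      funext b
      rw [(hasSum_Bb b).tsum_eq]
    have su : Summable (fun b : ℕ => zeta 2/((b:ℝ)+1)^2) :=
      (summable_sq.mul_left (zeta 2)).congr (fun b => by ring)
    have sv : Summable (fun b : ℕ => 2*(H (b+1))/((b:ℝ)+1)^3) :=
      (summable_zetaH3term.mul_left 2).congr (fun b => by ring)
    rw [e3, Summable.tsum_add (su.sub sv) summable_W, Summable.tsum_sub su sv]
    have hu : ∑' b : ℕ, zeta 2/((b:ℝ)+1)^2 = zeta 2 * zeta 2 := by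
      rw [show (fun b : ℕ => zeta 2/((b:ℝ)+1)^2)
          = fun b : ℕ => zeta 2 * (1/((b:ℝ)+1)^2) from funext fun b => by ring]
      rw [tsum_mul_left]
      rfl
    have hv : ∑' b : ℕ, 2*(H (b+1))/((b:ℝ)+1)^3 = 2 * zetaH 3 := by
      rw [show (fun b : ℕ => 2*(H (b+1))/((b:ℝ)+1)^3)
          = fun b : ℕ => 2 * (H (b+1)/((b:ℝ)+1)^3) from funext fun b => by ring]
      rw [tsum_mul_left]
      rfl
    rw [hu, hv]
  have := e1.symm.trans e2
  nlinarith [this]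

/-! ### Main theorem -/

theorem stmt12 :
    ∑' n : ℕ, H (n + 1) * hzeta 3 (n + 1) =
      2 * zeta 3 + (5 / 4) * zeta 4 - zeta 2 := by
  have hgs : Summable (fun p : ℕ × ℕ => gM p.1 (p.1+p.2)) :=
    summable_M.congr (fun p => by unfold Mfun gM; push_cast; ring_nf)
  calc ∑' n : ℕ, H (n + 1) * hzeta 3 (n + 1)
      = ∑' n : ℕ, ∑' b : ℕ, Mfun (n, b) := tsum_congr fun n => ((fiberM n).tsum_eq).symm
    _ = ∑' p : ℕ × ℕ, Mfun p := (Summable.tsum_prod' summable_M (fun a => (fiberM a).summable)).symm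
    _ = ∑' p : ℕ × ℕ, gM p.1 (p.1+p.2) :=
        tsum_congr fun p => by unfold Mfun gM; push_cast; ring_nf
    _ = ∑' s : ℕ, ∑ a ∈ range (s+1), gM a s := tsum_diag gM hgs
    _ = ∑' s : ℕ, (H (s+1)/((s:ℝ)+1)^3 + H (s+1)/((s:ℝ)+1)^2 - 1/((s:ℝ)+1)^2) := by
        apply tsum_congr
        intro s
        unfold gM
        rw [← Finset.sum_mul, sum_H]
        have hs : (0:ℝ) < (s:ℝ)+1 := by positivity
        field_simp
        ring
    _ = zetaH 3 + zetaH 2 - zeta 2 :=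
        ((summable_zetaH3term.hasSum.add summable_zetaH2term.hasSum).sub
          summable_sq.hasSum).tsum_eq
    _ = 2 * zeta 3 + (5 / 4) * zeta 4 - zeta 2 := by
        rw [zetaH2_eq, zetaH3_eq, zeta_two_eq, zeta_four_eq]
        ring
end

section
/- For every positive integer r, sum_{n=1}^infty h_n^(r) * B(r+1, n+1) = 1, where B is the Beta function B(x,y) = integral_0^1 t^{x-1}(1-t)^{y-1} dt. -/
open scoped BigOperators

open Filter intervalIntegral

noncomputable def c (r n : ℕ) : ℝ := ∫ t in (0:ℝ)..1, t ^ r * (1 - t) ^ n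

lemma c_int (r n : ℕ) :
    IntervalIntegrable (fun t : ℝ => t ^ r * (1 - t) ^ n) MeasureTheory.volume 0 1 :=
  ((continuous_pow r).mul ((continuous_const.sub continuous_id).pow n)).intervalIntegrable 0 1

lemma h_nonneg : ∀ r n, 0 ≤ h r n := by
  intro r
  induction r with
  | zero => intro n; simp [h]
  | succ r ih => intro n; rw [h]; exact Finset.sum_nonneg fun k _ => ih (k + 1)

lemma c_nonneg (r n : ℕ) : 0 ≤ c r n := by
  apply intervalIntegral.integral_nonneg (by norm_num)
  intro t ht
  exact mul_nonneg (pow_nonneg ht.1 r) (pow_nonneg (by linarith [ht.2]) n)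

lemma c_zero (n : ℕ) : c 0 n = 1 / (n + 1) := by
  have : c 0 n = ∫ t in (0:ℝ)..1, (fun x : ℝ => x ^ n) (1 - t) := by
    simp [c]
  rw [this, intervalIntegral.integral_comp_sub_left (fun x : ℝ => x ^ n) 1]
  norm_num [integral_pow]

lemma c_succ (r n : ℕ) : c (r + 1) n = c r n - c r (n + 1) := by
  have : c r n - c r (n + 1) = ∫ t in (0:ℝ)..1,
      (t ^ r * (1 - t) ^ n - t ^ r * (1 - t) ^ (n + 1)) := by
    rw [intervalIntegral.integral_sub (c_int r n) (c_int r (n + 1))]; rfl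
  rw [this, c]
  congr 1
  funext t
  ring

lemma c_mono (r n : ℕ) : c r (n + 1) ≤ c r n := by
  have := c_succ r n
  have := c_nonneg (r + 1) n
  linarith

lemma c_le (r n : ℕ) : c r n ≤ 1 / (n + 1) := by
  rw [← c_zero n]
  apply intervalIntegral.integral_mono_on (by norm_num) (c_int r n) (c_int 0 n)
  intro t ht
  have h1 : (0:ℝ) ≤ 1 - t := by linarith [ht.2]
  have : t ^ r ≤ 1 := pow_le_one₀ ht.1 ht.2
  calc t ^ r * (1 - t) ^ n ≤ 1 * (1 - t) ^ n := by
        exact mul_le_mul_of_nonneg_right this (pow_nonneg h1 n)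
    _ = t ^ 0 * (1 - t) ^ n := by ring

lemma hasSum_sub (f : ℕ → ℝ) (hmono : ∀ n, f (n + 1) ≤ f n)
    (hlim : Tendsto f atTop (nhds 0)) : HasSum (fun n => f n - f (n + 1)) (f 0) := by
  rw [hasSum_iff_tendsto_nat_of_nonneg (fun i => by linarith [hmono i])]
  have : ∀ n, ∑ i ∈ Finset.range n, (f i - f (i + 1)) = f 0 - f n := by
    intro n; exact Finset.sum_range_sub' f n
  simp only [this]
  simpa using tendsto_const_nhds.sub hlim

lemma c_tendsto (r m : ℕ) : Tendsto (fun j => c r (m + j)) atTop (nhds 0) := by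
  apply squeeze_zero (fun j => c_nonneg r (m + j)) (fun j => c_le r (m + j))
  have h1 : Tendsto (fun j : ℕ => (1 : ℝ) / (j + 1)) atTop (nhds 0) :=
    tendsto_one_div_add_atTop_nhds_zero_nat
  apply squeeze_zero (fun j => by positivity) _ h1
  intro j
  apply one_div_le_one_div_of_le (by positivity)
  push_cast
  linarith [Nat.cast_nonneg (α := ℝ) m]

lemma hasSum_c (r m : ℕ) : HasSum (fun j => c (r + 1) (m + j)) (c r m) := by
  have H := hasSum_sub (fun j => c r (m + j)) (fun n => c_mono r (m + n)) (c_tendsto r m)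
  have heq : (fun j => c (r + 1) (m + j)) = fun j => c r (m + j) - c r (m + j + 1) :=
    funext fun j => c_succ r (m + j)
  rw [heq]
  exact H

lemma tsum_ofReal_c (r m : ℕ) :
    ∑' j : ℕ, ENNReal.ofReal (c (r + 1) (m + j)) = ENNReal.ofReal (c r m) := by
  rw [← ENNReal.ofReal_tsum_of_nonneg (fun j => c_nonneg _ _) (hasSum_c r m).summable,
    (hasSum_c r m).tsum_eq]

lemma shifted (r k : ℕ) :
    (∑' n : ℕ, if k ≤ n then ENNReal.ofReal (c (r + 1) (n + 1)) else (0 : ENNReal))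
      = ENNReal.ofReal (c r (k + 1)) := by
  have hinj : Function.Injective (fun j : ℕ => j + k) := add_left_injective k
  have hsupp : Function.support
      (fun n : ℕ => if k ≤ n then ENNReal.ofReal (c (r + 1) (n + 1)) else (0 : ENNReal))
      ⊆ Set.range (fun j : ℕ => j + k) := by
    intro n hn
    simp only [Function.mem_support] at hn
    by_cases hkn : k ≤ n
    · exact ⟨n - k, show n - k + k = n by omega⟩
    · exact absurd (if_neg hkn) hn
  rw [← hinj.tsum_eq hsupp]
  have h2 : ∀ j : ℕ, (if k ≤ j + k then ENNReal.ofReal (c (r + 1) (j + k + 1)) else (0 : ENNReal))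
      = ENNReal.ofReal (c (r + 1) ((k + 1) + j)) := by
    intro j
    rw [if_pos (Nat.le_add_left k j)]
    congr 2
    omega
  calc (∑' j : ℕ, if k ≤ j + k then ENNReal.ofReal (c (r + 1) (j + k + 1)) else (0 : ENNReal))
      = ∑' j : ℕ, ENNReal.ofReal (c (r + 1) ((k + 1) + j)) := tsum_congr h2
    _ = ENNReal.ofReal (c r (k + 1)) := tsum_ofReal_c r (k + 1)

lemma key : ∀ r : ℕ, (∑' n : ℕ, ENNReal.ofReal (h r (n + 1) * c r (n + 1))) = 1 := by
  intro r
  induction r with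
  | zero =>
    have hterm : ∀ n : ℕ, h 0 (n + 1) * c 0 (n + 1)
        = 1 / ((n : ℝ) + 1) - 1 / (((n + 1 : ℕ) : ℝ) + 1) := by
      intro n
      have hh : h 0 (n + 1) = 1 / ((n : ℝ) + 1) := by simp [h]
      rw [hh, c_zero]
      push_cast
      have h1 : ((n : ℝ) + 1) ≠ 0 := by positivity
      have h2 : ((n : ℝ) + 1 + 1) ≠ 0 := by positivity
      field_simp
      try ring
    have hs : HasSum (fun n : ℕ => h 0 (n + 1) * c 0 (n + 1)) 1 := by
      have H := hasSum_sub (fun n : ℕ => (1 : ℝ) / (n + 1))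
        (fun n => by
          apply one_div_le_one_div_of_le (by positivity)
          push_cast; linarith)
        tendsto_one_div_add_atTop_nhds_zero_nat
      simp only [hterm]
      simpa using H
    rw [← ENNReal.ofReal_tsum_of_nonneg
      (fun n => mul_nonneg (h_nonneg 0 _) (c_nonneg 0 _)) hs.summable, hs.tsum_eq,
      ENNReal.ofReal_one]
  | succ r ih =>
    have expand : ∀ n : ℕ, ENNReal.ofReal (h (r + 1) (n + 1) * c (r + 1) (n + 1)) =
        ∑' k : ℕ, if k ≤ n then
          ENNReal.ofReal (h r (k + 1)) * ENNReal.ofReal (c (r + 1) (n + 1)) else 0 := by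
      intro n
      rw [tsum_eq_sum (s := Finset.range (n + 1))
        (fun k hk => by rw [if_neg]; simpa [Nat.lt_succ] using hk)]
      have : h (r + 1) (n + 1) = ∑ k ∈ Finset.range (n + 1), h r (k + 1) := by rw [h]
      rw [this, Finset.sum_mul, ENNReal.ofReal_sum_of_nonneg
        (fun k _ => mul_nonneg (h_nonneg r _) (c_nonneg _ _))]
      apply Finset.sum_congr rfl
      intro k hk
      rw [if_pos (by simpa [Nat.lt_succ] using hk),
        ENNReal.ofReal_mul (h_nonneg r _)]
    calc (∑' n : ℕ, ENNReal.ofReal (h (r + 1) (n + 1) * c (r + 1) (n + 1)))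
        = ∑' (n : ℕ) (k : ℕ), if k ≤ n then
            ENNReal.ofReal (h r (k + 1)) * ENNReal.ofReal (c (r + 1) (n + 1)) else 0 := by
          exact tsum_congr expand
      _ = ∑' (k : ℕ) (n : ℕ), if k ≤ n then
            ENNReal.ofReal (h r (k + 1)) * ENNReal.ofReal (c (r + 1) (n + 1)) else 0 :=
          ENNReal.tsum_comm
      _ = ∑' k : ℕ, ENNReal.ofReal (h r (k + 1)) *
            ∑' n : ℕ, (if k ≤ n then ENNReal.ofReal (c (r + 1) (n + 1)) else 0) := by
          apply tsum_congr; intro k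
          rw [← ENNReal.tsum_mul_left]
          apply tsum_congr; intro n
          split <;> simp
      _ = ∑' k : ℕ, ENNReal.ofReal (h r (k + 1)) * ENNReal.ofReal (c r (k + 1)) := by
          apply tsum_congr; intro k
          rw [shifted r k]
      _ = ∑' k : ℕ, ENNReal.ofReal (h r (k + 1) * c r (k + 1)) := by
          apply tsum_congr; intro k
          rw [ENNReal.ofReal_mul (h_nonneg r _)]
      _ = 1 := ih

theorem stmt17 (r : ℕ) (hr : 1 ≤ r) :
    ∑' n : ℕ, h r (n + 1) * ∫ t in (0 : ℝ)..1, t ^ r * (1 - t) ^ (n + 1) = 1 := by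
  have hk := key r
  have hnonneg : ∀ n : ℕ, 0 ≤ h r (n + 1) * c r (n + 1) :=
    fun n => mul_nonneg (h_nonneg r _) (c_nonneg r _)
  have hsum : Summable (fun n : ℕ => h r (n + 1) * c r (n + 1)) := by
    have := ENNReal.summable_toReal (hk ▸ ENNReal.one_ne_top)
    simpa [ENNReal.toReal_ofReal (hnonneg _)] using this
  have : ENNReal.ofReal (∑' n : ℕ, h r (n + 1) * c r (n + 1)) = 1 := by
    rw [ENNReal.ofReal_tsum_of_nonneg hnonneg hsum]; exact hk
  have h1 : ∑' n : ℕ, h r (n + 1) * c r (n + 1) = 1 := by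
    have := congrArg ENNReal.toReal this
    rwa [ENNReal.toReal_ofReal (tsum_nonneg hnonneg), ENNReal.toReal_one] at this
  exact h1
end
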